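/- Let f ∈ ℍ[t] be a nonzero polynomial over the quaternions of degree n. Then the set {(Re(α), ‖α‖) : α ∈ ℍ is a right root of f} ⊆ ℝ × ℝ is finite and has at most n elements. (Since two quaternions are similar exactly when they have equal real parts and equal norms, this says that the number of similarity classes containing right roots of f is at most n.) -/

import Mathlib

open Polynomial

noncomputable def evalR (β : Quaternion ℝ) (f : Polynomial (Quaternion ℝ)) : Quaternion ℝ :=
  ∑ k ∈ Finset.range (f.natDegree + 1), f.coeff k * β ^ k

noncomputable section RootClassAux

local notation "ℍ" => Quaternion ℝ

def pstar (f : ℍ[X]) : ℍ[X] := ⟨⟨f.toFinsupp.coeff.mapRange star (star_zero _)⟩⟩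

@[simp] lemma coeff_pstar (f : ℍ[X]) (n : ℕ) : (pstar f).coeff n = star (f.coeff n) := rfl

lemma pstar_add (f g : ℍ[X]) : pstar (f + g) = pstar f + pstar g := by
  apply Polynomial.ext; intro n; simp [star_add]

lemma pstar_mul (f g : ℍ[X]) : pstar (f * g) = pstar g * pstar f := by
  apply Polynomial.ext; intro n
  simp only [coeff_pstar, coeff_mul]
  rw [star_sum, ← Finset.Nat.sum_antidiagonal_swap (f :=
    fun p => star (g.coeff p.1) * star (f.coeff p.2))]
  simp [star_mul]

lemma pstar_ne_zero {f : ℍ[X]} (hf : f ≠ 0) : pstar f ≠ 0 := by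
  intro h
  apply hf
  apply Polynomial.ext; intro n
  have := congrArg (fun p => Polynomial.coeff p n) h
  simpa using congrArg star this

lemma natDegree_pstar_le (f : ℍ[X]) : (pstar f).natDegree ≤ f.natDegree := by
  apply natDegree_le_iff_coeff_eq_zero.2
  intro m hm
  simp [coeff_eq_zero_of_natDegree_lt hm]

/-- a real-coefficient polynomial (mapped into ℍ) commutes with everything -/
lemma map_comm (P : ℝ[X]) (g : ℍ[X]) :
    P.map (algebraMap ℝ ℍ) * g = g * P.map (algebraMap ℝ ℍ) := by
  apply Polynomial.ext; intro n
  simp only [coeff_mul, coeff_map]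
  rw [← Finset.Nat.sum_antidiagonal_swap (f :=
    fun p => g.coeff p.1 * (algebraMap ℝ ℍ) (P.coeff p.2))]
  simp only [Prod.fst_swap, Prod.snd_swap]
  refine Finset.sum_congr rfl fun p _ => ?_
  rw [show ((algebraMap ℝ ℍ) (P.coeff p.1)) = ((P.coeff p.1 : ℝ) : ℍ) from congrFun Quaternion.algebraMap_def _]
  exact Quaternion.coe_commutes _ _

lemma pstar_map (P : ℝ[X]) : pstar (P.map (algebraMap ℝ ℍ)) = P.map (algebraMap ℝ ℍ) := by
  apply Polynomial.ext; intro n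
  simp [coeff_map, Quaternion.algebraMap_def, Quaternion.star_coe]

def qpoly (r s : ℝ) : ℝ[X] := X ^ 2 + (C (-(2 * r)) * X + C (s ^ 2))

lemma qpoly_monic (r s : ℝ) : (qpoly r s).Monic := by
  apply monic_X_pow_add (n := 2)
  apply lt_of_le_of_lt (degree_linear_le)
  norm_num

lemma qpoly_natDegree (r s : ℝ) : (qpoly r s).natDegree = 2 := by
  have : qpoly r s = C 1 * X ^ 2 + C (-(2*r)) * X + C (s^2) := by
    rw [map_one, one_mul, qpoly, add_assoc]
  rw [this]
  exact natDegree_quadratic one_ne_zero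

lemma eval₂_qpoly_self (α : ℍ) :
    eval₂ (algebraMap ℝ ℍ) α (qpoly α.re ‖α‖) = 0 := by
  have h1 : ((2 * α.re : ℝ) : ℍ) = star α + α := by
    rw [Quaternion.star_eq_two_re_sub, sub_add_cancel]
  have h2 : ((‖α‖ ^ 2 : ℝ) : ℍ) = α * star α := by
    rw [Quaternion.self_mul_star]
    norm_cast
    rw [sq, Quaternion.normSq_eq_norm_mul_self]
  have h3 : star α * α = α * star α := by
    rw [Quaternion.self_mul_star, Quaternion.star_mul_self]
  have hc : ∀ x : ℝ, (algebraMap ℝ ℍ) x = (x : ℍ) := fun x => congrFun Quaternion.algebraMap_def x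
  simp only [qpoly, eval₂_add, eval₂_mul_X, eval₂_C, eval₂_X_pow]
  rw [hc, hc, show ((-(2 * α.re) : ℝ) : ℍ) = -((2*α.re : ℝ) : ℍ) by push_cast; ring, h1, h2]
  rw [neg_mul, add_mul, h3, sq]
  abel

/-- key lemma: if α is a right root of f then its characteristic quadratic
(mapped to ℍ) divides f * pstar f. -/
lemma qpoly_dvd_norm {f : ℍ[X]} {α : ℍ} (hα : eval₂ (RingHom.id ℍ) α f = 0) :
    (qpoly α.re ‖α‖).map (algebraMap ℝ ℍ) ∣ f * pstar f := by
  set σ := algebraMap ℝ ℍ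
  set Q := qpoly α.re ‖α‖ with hQ
  set QH := Q.map σ with hQH
  have hmonic : QH.Monic := (qpoly_monic _ _).map σ
  have hcomm : ∀ k : ℕ, Commute ((RingHom.id ℍ) (QH.coeff k)) α := by
    intro k
    simp only [RingHom.id_apply, hQH, coeff_map]
    rw [show σ (Q.coeff k) = ((Q.coeff k : ℝ) : ℍ) from congrFun Quaternion.algebraMap_def _]
    exact Quaternion.coe_commute _ _
  have hevalQH : eval₂ (RingHom.id ℍ) α QH = 0 := by
    rw [hQH, eval₂_map]
    have : (RingHom.id ℍ).comp σ = σ := by ext x <;> simp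
    rw [this]
    exact eval₂_qpoly_self α
  -- divide
  set r := f %ₘ QH with hr
  set g := f /ₘ QH with hg
  have hdiv : r + QH * g = f := modByMonic_add_div f QH
  have hQHg : eval₂ (RingHom.id ℍ) α (QH * g) = 0 := by
    rw [map_comm Q g, eval₂_mul_noncomm _ _ hcomm, hevalQH, mul_zero]
  have hevr : eval₂ (RingHom.id ℍ) α r = 0 := by
    have := congrArg (eval₂ (RingHom.id ℍ) α) hdiv
    rw [eval₂_add, hQHg, add_zero] at this
    rw [this, hα]
  -- r is linear
  have hrdeg : r.natDegree ≤ 1 := by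
    by_cases h0 : r = 0
    · simp [h0]
    have hdlt : r.degree < QH.degree := degree_modByMonic_lt f hmonic
    have hQHdeg : QH.natDegree = 2 := by
      rw [hQH, (qpoly_monic _ _).natDegree_map]
      exact qpoly_natDegree _ _
    have : r.natDegree < QH.natDegree := by
      apply natDegree_lt_natDegree h0
      exact hdlt
    omega
  set b := r.coeff 1 with hb
  set c := r.coeff 0 with hc
  have hrform : r = C b * X + C c := eq_X_add_C_of_natDegree_le_one hrdeg
  have hbc : b * α + c = 0 := by
    rw [hrform] at hevr
    simpa using hevr
  have hcval : c = -(b * α) := by linear_combination (norm := noncomm_ring) hbc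
  -- the mapped quadratic factors as (X - C α) * (X - C (star α))
  have hσ : ∀ x : ℝ, σ x = (x : ℍ) := fun x => congrFun Quaternion.algebraMap_def x
  have e2 : σ (‖α‖ ^ 2) = α * star α := by
    rw [hσ, Quaternion.self_mul_star]
    norm_cast
    rw [sq, Quaternion.normSq_eq_norm_mul_self]
  have e1 : σ (-(2 * α.re)) = -(star α + α) := by
    rw [map_neg, hσ]
    congr 1
    rw [Quaternion.star_eq_two_re_sub, sub_add_cancel]
  have hmid : (X - C α) * (X - C (star α)) = QH := by
    rw [hQH, hQ, qpoly]
    simp only [Polynomial.map_add, Polynomial.map_pow, map_X, Polynomial.map_mul, map_C, e1, e2]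
    rw [sub_mul, mul_sub, mul_sub, X_mul_C, ← C_mul, C_neg, C_add]
    simp only [neg_add, add_mul, neg_mul, sq]
    abel
  have hpsr : pstar r = (X - C (star α)) * C (star b) := by
    rw [hrform, hcval]
    apply Polynomial.ext; intro n
    simp only [coeff_pstar, coeff_add, coeff_C_mul, coeff_X, coeff_C, sub_mul, X_mul_C,
      coeff_sub, coeff_mul_C, ← C_mul]
    rcases n with _ | _ | n <;>
      simp [star_mul, mul_comm, mul_ite, apply_ite star]
  have hrr : r * pstar r = C ((Quaternion.normSq b : ℝ) : ℍ) * QH := by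
    have hr2 : r = C b * (X - C α) := by
      rw [hrform, hcval, mul_sub, ← C_mul, C_neg, sub_eq_add_neg]
    rw [hpsr, hr2, mul_assoc, ← mul_assoc (X - C α), hmid]
    have : QH * C (star b) = C (star b) * QH := by
      have := map_comm Q (C (star b)); rw [← hQH] at this; rw [this]
    rw [this, ← mul_assoc, ← C_mul, Quaternion.self_mul_star]
  -- put everything together
  have hexp : f * pstar f =
      r * pstar r + (QH * (r * pstar g) + (QH * (g * pstar r) + QH * (g * (pstar g * QH)))) := by
    conv_lhs => rw [← hdiv]
    rw [pstar_add, pstar_mul]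
    have hQHps : pstar QH = QH := by rw [hQH]; exact pstar_map Q
    rw [hQHps]
    have hc1 : r * (pstar g * QH) = QH * (r * pstar g) := by
      have := map_comm Q (r * pstar g); rw [← hQH] at this
      rw [this, mul_assoc]
    have hc2 : QH * g * pstar r = QH * (g * pstar r) := by rw [mul_assoc]
    have hc3 : QH * g * (pstar g * QH) = QH * (g * (pstar g * QH)) := by rw [mul_assoc]
    rw [add_mul, mul_add, mul_add, hc1, hc2, hc3]
    abel
  rw [hexp, hrr]
  have hdvd1 : QH ∣ C ((Quaternion.normSq b : ℝ) : ℍ) * QH := by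
    have := map_comm Q (C ((Quaternion.normSq b : ℝ) : ℍ)); rw [← hQH] at this
    exact ⟨_, this.symm⟩
  exact dvd_add hdvd1 (dvd_add (dvd_mul_right _ _) (dvd_add (dvd_mul_right _ _) (dvd_mul_right _ _)))

lemma self_mul_pstar_mem_lifts (f : ℍ[X]) : f * pstar f ∈ lifts (algebraMap ℝ ℍ) := by
  rw [lifts_iff_coeff_lifts]
  intro n
  have hstar : star ((f * pstar f).coeff n) = (f * pstar f).coeff n := by
    rw [coeff_mul, star_sum]
    simp only [star_mul, coeff_pstar, star_star]
    exact Finset.Nat.sum_antidiagonal_swap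
      (f := fun p => f.coeff p.1 * star (f.coeff p.2))
  rw [Quaternion.star_eq_self] at hstar
  exact ⟨((f * pstar f).coeff n).re,
    (congrFun Quaternion.algebraMap_def _).trans hstar.symm⟩

lemma evalR_eq_eval₂ (α : ℍ) (f : ℍ[X]) : evalR α f = eval₂ (RingHom.id ℍ) α f := by
  rw [evalR, eval₂_eq_sum_range]
  simp



end RootClassAux

theorem card_root_classes_le_degree (f : Polynomial (Quaternion ℝ)) (hf : f ≠ 0) :
    ({p : ℝ × ℝ | ∃ α : Quaternion ℝ, evalR α f = 0 ∧ p = (α.re, ‖α‖)}).Finite ∧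
    ({p : ℝ × ℝ | ∃ α : Quaternion ℝ, evalR α f = 0 ∧ p = (α.re, ‖α‖)}).ncard ≤
      f.natDegree := by
  classical
  set S := {p : ℝ × ℝ | ∃ α : Quaternion ℝ, evalR α f = 0 ∧ p = (α.re, ‖α‖)} with hSdef
  set σ := algebraMap ℝ (Quaternion ℝ) with hσdef
  have hinj : Function.Injective σ := Quaternion.algebraMap_injective
  have hP0 : f * pstar f ≠ 0 := mul_ne_zero hf (pstar_ne_zero hf)
  obtain ⟨N, hN, hNdeg'⟩ := mem_lifts_and_degree_eq (self_mul_pstar_mem_lifts f)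
  have hN0 : N ≠ 0 := fun h => hP0 (by rw [← hN, h, Polynomial.map_zero])
  have hNnat : N.natDegree ≤ f.natDegree + f.natDegree := by
    have h1 : N.natDegree = (f * pstar f).natDegree := by
      rw [← hN, natDegree_map_eq_of_injective hinj]
    rw [h1]
    exact le_trans natDegree_mul_le (add_le_add le_rfl (natDegree_pstar_le f))
  have hmem : ∀ p ∈ S, 0 ≤ p.2 ∧ p.1 ^ 2 ≤ p.2 ^ 2 ∧ qpoly p.1 p.2 ∣ N := by
    rintro p ⟨α, hroot, rfl⟩
    refine ⟨norm_nonneg α, ?_, ?_⟩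
    · have h2 : ‖α‖ ^ 2 = Quaternion.normSq α := by
        rw [sq, Quaternion.normSq_eq_norm_mul_self]
      simp only
      rw [h2, Quaternion.normSq_def']
      nlinarith [sq_nonneg α.imI, sq_nonneg α.imJ, sq_nonneg α.imK]
    · have hev : eval₂ (RingHom.id (Quaternion ℝ)) α f = 0 := by
        rw [← evalR_eq_eval₂, hroot]
      have hdvd := qpoly_dvd_norm hev
      have hmod : (N %ₘ qpoly α.re ‖α‖).map σ = 0 := by
        rw [map_modByMonic _ (qpoly_monic _ _), hN]
        exact (modByMonic_eq_zero_iff_dvd ((qpoly_monic α.re ‖α‖).map σ)).2 hdvd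
      have h0 : N %ₘ qpoly α.re ‖α‖ = 0 := by
        apply Polynomial.map_injective σ hinj
        simpa using hmod
      exact (modByMonic_eq_zero_iff_dvd (qpoly_monic _ _)).1 h0
  set z : ℝ × ℝ → ℂ := fun p => ⟨p.1, Real.sqrt (p.2 ^ 2 - p.1 ^ 2)⟩ with hzdef
  have hrec : ∀ p ∈ S, (z p).re = p.1 ∧ ‖z p‖ = p.2 := by
    intro p hp
    obtain ⟨h2, hle, -⟩ := hmem p hp
    refine ⟨rfl, ?_⟩
    rw [Complex.norm_def, show Complex.normSq (z p) = p.1 * p.1 + Real.sqrt (p.2^2 - p.1^2) * Real.sqrt (p.2^2 - p.1^2) from Complex.normSq_mk _ _,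
      Real.mul_self_sqrt (by linarith)]
    have : p.1 * p.1 + (p.2 ^ 2 - p.1 ^ 2) = p.2 ^ 2 := by ring
    rw [this, Real.sqrt_sq h2]
  have hfact : ∀ p ∈ S, (qpoly p.1 p.2).map (algebraMap ℝ ℂ) =
      (X - C (z p)) * (X - C ((starRingEnd ℂ) (z p))) := by
    intro p hp
    obtain ⟨h2, hle, -⟩ := hmem p hp
    have hsum : z p + (starRingEnd ℂ) (z p) = ((2 * p.1 : ℝ) : ℂ) := by
      apply Complex.ext <;> simp [hzdef] <;> ring
    have hprod : z p * (starRingEnd ℂ) (z p) = ((p.2 ^ 2 : ℝ) : ℂ) := by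
      rw [Complex.mul_conj]
      norm_cast
      rw [show Complex.normSq (z p) = p.1 * p.1 + Real.sqrt (p.2^2 - p.1^2) * Real.sqrt (p.2^2 - p.1^2) from Complex.normSq_mk _ _,
        Real.mul_self_sqrt (by linarith)]
      ring
    simp only [qpoly, Polynomial.map_add, Polynomial.map_pow, Polynomial.map_mul, map_X, map_C]
    rw [show (algebraMap ℝ ℂ) (-(2 * p.1)) = -(z p + (starRingEnd ℂ) (z p)) by
        rw [hsum]; simp,
      show (algebraMap ℝ ℂ) (p.2 ^ 2) = z p * (starRingEnd ℂ) (z p) by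
        rw [hprod]; simp]
    rw [C_neg, C_add, C_mul]
    ring
  set NC := N.map (algebraMap ℝ ℂ) with hNCdef
  have hNC0 : NC ≠ 0 := fun h =>
    hN0 (Polynomial.map_injective _ (algebraMap ℝ ℂ).injective
      (h.trans (Polynomial.map_zero _).symm))
  have hzS : ∀ p ∈ S, z p ∈ NC.roots.toFinset := by
    intro p hp
    rw [Multiset.mem_toFinset, mem_roots']
    refine ⟨hNC0, ?_⟩
    obtain ⟨-, -, hdvd⟩ := hmem p hp
    obtain ⟨u, hu⟩ := Polynomial.map_dvd (algebraMap ℝ ℂ) hdvd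
    rw [IsRoot, hNCdef, hu, hfact p hp, eval_mul, eval_mul, eval_sub, eval_X, eval_C,
      sub_self, zero_mul, zero_mul]
  have hinjOn : Set.InjOn z S := by
    intro p hp q hq hpq
    obtain ⟨hp1, hp2⟩ := hrec p hp
    obtain ⟨hq1, hq2⟩ := hrec q hq
    exact Prod.ext (by rw [← hp1, ← hq1, hpq]) (by rw [← hp2, ← hq2, hpq])
  have hfin : S.Finite := Set.Finite.of_finite_image
    (Set.Finite.subset NC.roots.toFinset.finite_toSet
      (by rintro w ⟨p, hp, rfl⟩; exact hzS p hp)) hinjOn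
  refine ⟨hfin, ?_⟩
  set T := hfin.toFinset with hT
  have hTS : ∀ p ∈ T, p ∈ S := fun p hp => (Set.Finite.mem_toFinset hfin).1 hp
  have hrecover : ∀ p ∈ S, ∀ q ∈ S, (z p).re = (z q).re →
      ‖z p‖ = ‖z q‖ → p = q := by
    intro p hp q hq h1 h2
    obtain ⟨hp1, hp2⟩ := hrec p hp
    obtain ⟨hq1, hq2⟩ := hrec q hq
    exact Prod.ext (by rw [← hp1, ← hq1, h1]) (by rw [← hp2, ← hq2, h2])
  have hpair : (↑T : Set (ℝ × ℝ)).Pairwise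
      (Function.onFun IsCoprime fun p => (X - C (z p)) * (X - C ((starRingEnd ℂ) (z p)))) := by
    intro p hp q hq hne
    have hpS : p ∈ S := hTS p (by simpa using hp)
    have hqS : q ∈ S := hTS q (by simpa using hq)
    have k11 : z p ≠ z q := fun h => hne (hrecover p hpS q hqS (by rw [h]) (by rw [h]))
    have k12 : z p ≠ (starRingEnd ℂ) (z q) := fun h => hne (hrecover p hpS q hqS
      (by rw [h, Complex.conj_re]) (by rw [h, Complex.norm_conj]))
    have k21 : (starRingEnd ℂ) (z p) ≠ z q := fun h => hne (hrecover p hpS q hqS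
      (by rw [← h, Complex.conj_re]) (by rw [← h, Complex.norm_conj]))
    have k22 : (starRingEnd ℂ) (z p) ≠ (starRingEnd ℂ) (z q) := fun h =>
      k11 (starRingEnd ℂ |>.injective h |> fun h' => by rw [h'])
    have c11 : IsCoprime (X - C (z p)) (X - C (z q)) :=
      Polynomial.isCoprime_X_sub_C_of_isUnit_sub ((sub_ne_zero.2 k11).isUnit)
    have c12 : IsCoprime (X - C (z p)) (X - C ((starRingEnd ℂ) (z q))) :=
      Polynomial.isCoprime_X_sub_C_of_isUnit_sub ((sub_ne_zero.2 k12).isUnit)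
    have c21 : IsCoprime (X - C ((starRingEnd ℂ) (z p))) (X - C (z q)) :=
      Polynomial.isCoprime_X_sub_C_of_isUnit_sub ((sub_ne_zero.2 k21).isUnit)
    have c22 : IsCoprime (X - C ((starRingEnd ℂ) (z p))) (X - C ((starRingEnd ℂ) (z q))) :=
      Polynomial.isCoprime_X_sub_C_of_isUnit_sub ((sub_ne_zero.2 k22).isUnit)
    exact (c11.mul_right c12).mul_left (c21.mul_right c22)
  have hproddvd : (∏ p ∈ T, ((X - C (z p)) * (X - C ((starRingEnd ℂ) (z p))))) ∣ NC :=
    Finset.prod_dvd_of_coprime hpair fun p hp => by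
      rw [← hfact p (hTS p hp)]
      exact Polynomial.map_dvd (algebraMap ℝ ℂ) (hmem p (hTS p hp)).2.2
  have hdegprod : (∏ p ∈ T, ((X - C (z p)) * (X - C ((starRingEnd ℂ) (z p))))).natDegree
      = 2 * T.card := by
    rw [Polynomial.natDegree_prod _ _ fun p _ =>
      mul_ne_zero (X_sub_C_ne_zero (z p)) (X_sub_C_ne_zero _)]
    rw [Finset.sum_congr rfl fun p _ => by
      rw [Polynomial.natDegree_mul (X_sub_C_ne_zero _) (X_sub_C_ne_zero _),
        natDegree_X_sub_C, natDegree_X_sub_C]]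
    rw [Finset.sum_const, smul_eq_mul, mul_comm]
  have hle2 : 2 * T.card ≤ NC.natDegree :=
    hdegprod ▸ Polynomial.natDegree_le_of_dvd hproddvd hNC0
  have hNCdeg : NC.natDegree = N.natDegree :=
    natDegree_map_eq_of_injective (algebraMap ℝ ℂ).injective N
  have hcard : S.ncard = T.card := Set.ncard_eq_toFinset_card S hfin
  rw [hcard]
  omega
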